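/- (Substitution step in the proof of Lemma 5.2.) Let s = r + iω with r, ω ∈ ℝ, and let x : [0,1] → ℂⁿ be such that w := H·x is continuously differentiable and s·x(ζ) = P₁ w′(ζ) + G₀ w(ζ) for all ζ ∈ [0,1]. Then the function y(ζ) := Φ_ω(ζ)·S^{−*}(ζ)·w(ζ) is continuously differentiable and satisfies y′(ζ) = (r·Δ(ζ)⁻¹ + Q_ω(ζ))·y(ζ) for all ζ ∈ [0,1]. -/

import Mathlib

open Matrix intervalIntegral
open scoped ComplexOrder

private lemma entry_contOn {n : ℕ} {s : Set ℝ} {M : ℝ → Matrix (Fin n) (Fin n) ℂ}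
    (h : ContinuousOn M s) (i j : Fin n) : ContinuousOn (fun ζ => M ζ i j) s :=
  continuousOn_pi.1 (continuousOn_pi.1 h i) j

private lemma contOn_matrix {n : ℕ} {s : Set ℝ} {M : ℝ → Matrix (Fin n) (Fin n) ℂ}
    (h : ∀ i j, ContinuousOn (fun ζ => M ζ i j) s) : ContinuousOn M s :=
  continuousOn_pi.2 fun i => continuousOn_pi.2 (h i)

private lemma contOn_mulVec {n : ℕ} {s : Set ℝ} {M : ℝ → Matrix (Fin n) (Fin n) ℂ}
    {v : ℝ → Fin n → ℂ} (hM : ContinuousOn M s) (hv : ContinuousOn v s) :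
    ContinuousOn (fun ζ => M ζ *ᵥ v ζ) s :=
  ((continuous_fst.matrix_mulVec continuous_snd :
      Continuous fun p : Matrix (Fin n) (Fin n) ℂ × (Fin n → ℂ) => p.1 *ᵥ p.2)).comp_continuousOn
    (hM.prodMk hv)

private lemma hasDW_matmul {n : ℕ} {s : Set ℝ} {ζ : ℝ}
    {A B : ℝ → Matrix (Fin n) (Fin n) ℂ} {A' B' : Matrix (Fin n) (Fin n) ℂ}
    (hA : ∀ i j, HasDerivWithinAt (fun t => A t i j) (A' i j) s ζ)
    (hB : ∀ i j, HasDerivWithinAt (fun t => B t i j) (B' i j) s ζ) :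
    ∀ i j, HasDerivWithinAt (fun t => (A t * B t) i j) ((A' * B ζ + A ζ * B') i j) s ζ := by
  intro i j
  simp only [Matrix.mul_apply, Matrix.add_apply]
  have := HasDerivWithinAt.fun_sum (u := Finset.univ)
    (A := fun k t => A t i k * B t k j)
    (A' := fun k => A' i k * B ζ k j + A ζ i k * B' k j)
    (fun k _ => (hA i k).mul (hB k j))
  simpa [Finset.sum_add_distrib] using this

private lemma hasDW_mulVec {n : ℕ} {s : Set ℝ} {ζ : ℝ}
    {A : ℝ → Matrix (Fin n) (Fin n) ℂ} {A' : Matrix (Fin n) (Fin n) ℂ}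
    {v : ℝ → Fin n → ℂ} {v' : Fin n → ℂ}
    (hA : ∀ i j, HasDerivWithinAt (fun t => A t i j) (A' i j) s ζ)
    (hv : HasDerivWithinAt v v' s ζ) :
    HasDerivWithinAt (fun t => A t *ᵥ v t) (A' *ᵥ v ζ + A ζ *ᵥ v') s ζ := by
  rw [hasDerivWithinAt_pi]
  intro i
  simp only [Matrix.mulVec, dotProduct, Pi.add_apply]
  have hvi : ∀ j, HasDerivWithinAt (fun t => v t j) (v' j) s ζ := hasDerivWithinAt_pi.1 hv
  have := HasDerivWithinAt.fun_sum (u := Finset.univ)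
    (A := fun j t => A t i j * v t j)
    (A' := fun j => A' i j * v ζ j + A ζ i j * v' j)
    (fun j _ => (hA i j).mul (hvi j))
  simpa [Finset.sum_add_distrib] using this

set_option maxHeartbeats 1000000

/-- Substitution step in the proof of Lemma 5.2: if `s = r + iω` and `w := H·x`
is continuously differentiable with `s·x(ζ) = P₁ w′(ζ) + G₀ w(ζ)` on `[0,1]`, then
`y(ζ) := Φ_ω(ζ)·S^{−*}(ζ)·w(ζ)` is continuously differentiable with
`y′(ζ) = (r·Δ(ζ)⁻¹ + Q_ω(ζ))·y(ζ)` on `[0,1]`, where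
`Φ_ω(ζ) = diag(exp(−iω∫₀^ζ αₖ))` (with `Δ⁻¹ = diag(α₁,…,αₙ)`), `S^{−*} = (S*)⁻¹`,
`Q = −Δ⁻¹·S^{−*}·H·G₀·S* + (d/dζ S^{−*})·S*` and `Q_ω = Φ_ω·Q·Φ_ω⁻¹`. -/
theorem substitution_step
    (n : ℕ) (hn : 0 < n)
    (P₁ : Matrix (Fin n) (Fin n) ℂ) (hP₁herm : P₁.IsHermitian) (hP₁inv : IsUnit P₁)
    (G₀ : Matrix (Fin n) (Fin n) ℂ)
    (H : ℝ → Matrix (Fin n) (Fin n) ℂ)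
    (hHcont : ∀ i j, ContinuousOn (fun ζ => H ζ i j) (Set.Icc 0 1))
    (hHherm : ∀ ζ ∈ Set.Icc (0 : ℝ) 1, (H ζ).IsHermitian)
    (hHpos : ∀ ζ ∈ Set.Icc (0 : ℝ) 1, (H ζ).PosDef)
    -- the diagonalization `P₁H(ζ) = S(ζ)⁻¹ Δ(ζ) S(ζ)` with `S, S⁻¹, Δ` continuously
    -- differentiable and `Δ(ζ)` diagonal with real entries
    (S Δ S' Δ' : ℝ → Matrix (Fin n) (Fin n) ℂ)
    (hS' : ∀ i j, ∀ ζ ∈ Set.Icc (0 : ℝ) 1,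
      HasDerivWithinAt (fun ξ => S ξ i j) (S' ζ i j) (Set.Icc 0 1) ζ)
    (hS'cont : ∀ i j, ContinuousOn (fun ζ => S' ζ i j) (Set.Icc 0 1))
    (hΔ' : ∀ i j, ∀ ζ ∈ Set.Icc (0 : ℝ) 1,
      HasDerivWithinAt (fun ξ => Δ ξ i j) (Δ' ζ i j) (Set.Icc 0 1) ζ)
    (hΔ'cont : ∀ i j, ContinuousOn (fun ζ => Δ' ζ i j) (Set.Icc 0 1))
    (hSunit : ∀ ζ ∈ Set.Icc (0 : ℝ) 1, IsUnit (S ζ))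
    (hΔunit : ∀ ζ ∈ Set.Icc (0 : ℝ) 1, IsUnit (Δ ζ))
    (α : Fin n → ℝ → ℝ)
    (hΔinv : ∀ ζ ∈ Set.Icc (0 : ℝ) 1,
      (Δ ζ)⁻¹ = Matrix.diagonal (fun k => ((α k ζ : ℝ) : ℂ)))
    (hdiagz : ∀ ζ ∈ Set.Icc (0 : ℝ) 1, P₁ * H ζ = (S ζ)⁻¹ * Δ ζ * S ζ)
    -- `S^{−*}` is continuously differentiable with derivative `Sstarinv'`
    (Sstarinv' : ℝ → Matrix (Fin n) (Fin n) ℂ)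
    (hSstarinv' : ∀ i j, ∀ ζ ∈ Set.Icc (0 : ℝ) 1,
      HasDerivWithinAt (fun ξ => ((S ξ)ᴴ)⁻¹ i j) (Sstarinv' ζ i j) (Set.Icc 0 1) ζ)
    (hSstarinv'cont : ∀ i j, ContinuousOn (fun ζ => Sstarinv' ζ i j) (Set.Icc 0 1))
    -- `Φ_ω`, `Q` and `Q_ω`
    (r ω : ℝ)
    (Φω Q Qω : ℝ → Matrix (Fin n) (Fin n) ℂ)
    (hΦω : ∀ ζ, Φω ζ = Matrix.diagonal
      (fun k => Complex.exp (-(Complex.I * (ω : ℂ) * ((∫ τ in (0 : ℝ)..ζ, α k τ : ℝ) : ℂ)))))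
    (hQ : ∀ ζ, Q ζ = -((Δ ζ)⁻¹ * ((S ζ)ᴴ)⁻¹ * H ζ * G₀ * (S ζ)ᴴ) + Sstarinv' ζ * (S ζ)ᴴ)
    (hQω : ∀ ζ, Qω ζ = Φω ζ * Q ζ * (Φω ζ)⁻¹)
    -- the solution `x` with `w := H·x` continuously differentiable solving the ODE
    (x w w' : ℝ → Fin n → ℂ)
    (hw : ∀ ζ ∈ Set.Icc (0 : ℝ) 1, w ζ = (H ζ) *ᵥ x ζ)
    (hw' : ∀ ζ ∈ Set.Icc (0 : ℝ) 1, HasDerivWithinAt w (w' ζ) (Set.Icc 0 1) ζ)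
    (hw'cont : ContinuousOn w' (Set.Icc 0 1))
    (hode : ∀ ζ ∈ Set.Icc (0 : ℝ) 1,
      ((r : ℂ) + (ω : ℂ) * Complex.I) • x ζ = P₁ *ᵥ w' ζ + G₀ *ᵥ w ζ)
    -- the substituted function `y = Φ_ω · S^{−*} · w`
    (y : ℝ → Fin n → ℂ)
    (hy : ∀ ζ, y ζ = (Φω ζ * ((S ζ)ᴴ)⁻¹) *ᵥ w ζ) :
    (∀ ζ ∈ Set.Icc (0 : ℝ) 1,
      HasDerivWithinAt y (((r : ℂ) • (Δ ζ)⁻¹ + Qω ζ) *ᵥ y ζ) (Set.Icc 0 1) ζ) ∧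
    ContinuousOn (fun ζ => ((r : ℂ) • (Δ ζ)⁻¹ + Qω ζ) *ᵥ y ζ) (Set.Icc 0 1) := by
  -- continuity of basic entries
  have hScont : ∀ i j, ContinuousOn (fun ζ => S ζ i j) (Set.Icc 0 1) :=
    fun i j ζ hζ => (hS' i j ζ hζ).continuousWithinAt
  have hΔcont : ∀ i j, ContinuousOn (fun ζ => Δ ζ i j) (Set.Icc 0 1) :=
    fun i j ζ hζ => (hΔ' i j ζ hζ).continuousWithinAt
  have hSicont : ∀ i j, ContinuousOn (fun ζ => ((S ζ)ᴴ)⁻¹ i j) (Set.Icc 0 1) :=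
    fun i j ζ hζ => (hSstarinv' i j ζ hζ).continuousWithinAt
  have hwcont : ContinuousOn w (Set.Icc 0 1) :=
    fun ζ hζ => (hw' ζ hζ).continuousWithinAt
  have hΔdet : ∀ ζ ∈ Set.Icc (0:ℝ) 1, IsUnit (Δ ζ).det :=
    fun ζ hζ => (Matrix.isUnit_iff_isUnit_det _).1 (hΔunit ζ hζ)
  -- α is nonvanishing
  have hαne : ∀ k, ∀ ζ ∈ Set.Icc (0:ℝ) 1, ((α k ζ : ℝ) : ℂ) ≠ 0 := by
    intro k ζ hζ
    have h1 : IsUnit ((Δ ζ)⁻¹).det := by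
      rw [Matrix.det_nonsing_inv]
      exact isUnit_ringInverse.2 (hΔdet ζ hζ)
    rw [hΔinv ζ hζ, Matrix.det_diagonal] at h1
    have h2 : (∏ i : Fin n, ((α i ζ : ℝ) : ℂ)) ≠ 0 := h1.ne_zero
    exact Finset.prod_ne_zero_iff.1 h2 k (Finset.mem_univ k)
  -- Δ is diagonal with entries α⁻¹
  have hΔdiag : ∀ ζ ∈ Set.Icc (0:ℝ) 1,
      Δ ζ = Matrix.diagonal (fun k => ((α k ζ : ℝ) : ℂ)⁻¹) := by
    intro ζ hζ
    have h1 : Matrix.diagonal (fun k => ((α k ζ : ℝ) : ℂ)⁻¹) * (Δ ζ)⁻¹ = 1 := by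
      rw [hΔinv ζ hζ, Matrix.diagonal_mul_diagonal]
      rw [show (fun k => ((α k ζ : ℝ) : ℂ)⁻¹ * ((α k ζ : ℝ) : ℂ)) = fun _ => (1:ℂ) from
        funext fun k => inv_mul_cancel₀ (hαne k ζ hζ), Matrix.diagonal_one]
    calc Δ ζ = ((Δ ζ)⁻¹)⁻¹ := (Matrix.nonsing_inv_nonsing_inv _ (hΔdet ζ hζ)).symm
      _ = _ := Matrix.inv_eq_left_inv h1
  have hΔherm : ∀ ζ ∈ Set.Icc (0:ℝ) 1, (Δ ζ)ᴴ = Δ ζ := by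
    intro ζ hζ
    rw [hΔdiag ζ hζ, Matrix.diagonal_conjTranspose]
    have : (star fun k => ((α k ζ : ℝ) : ℂ)⁻¹) = fun k => ((α k ζ : ℝ) : ℂ)⁻¹ := by
      funext k
      simp [Pi.star_apply, Complex.star_def, ← Complex.ofReal_inv, Complex.conj_ofReal]
    rw [this]
  -- continuity of α
  have hαcont : ∀ k, ContinuousOn (fun ζ => α k ζ) (Set.Icc (0:ℝ) 1) := by
    intro k
    have hne : ∀ ζ ∈ Set.Icc (0:ℝ) 1, Δ ζ k k ≠ 0 := by
      intro ζ hζ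
      rw [hΔdiag ζ hζ]
      simp only [Matrix.diagonal_apply_eq]
      exact inv_ne_zero (hαne k ζ hζ)
    have hc : ContinuousOn (fun ζ => ((Δ ζ k k)⁻¹).re) (Set.Icc (0:ℝ) 1) :=
      Complex.continuous_re.comp_continuousOn ((hΔcont k k).inv₀ hne)
    apply hc.congr
    intro ζ hζ
    show α k ζ = ((Δ ζ k k)⁻¹).re
    rw [hΔdiag ζ hζ]
    simp [Matrix.diagonal_apply_eq]
  -- the truncation β of α and its primitive
  set β : Fin n → ℝ → ℝ := fun k t => α k (max 0 (min 1 t)) with hβ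
  have hmem : ∀ t : ℝ, max 0 (min 1 t) ∈ Set.Icc (0:ℝ) 1 :=
    fun t => ⟨le_max_left _ _, max_le zero_le_one (min_le_left _ _)⟩
  have hβeq : ∀ k, ∀ t ∈ Set.Icc (0:ℝ) 1, β k t = α k t := by
    intro k t ht
    simp only [hβ]
    rw [min_eq_right ht.2, max_eq_right ht.1]
  have hβcont : ∀ k, Continuous (β k) := fun k =>
    (hαcont k).comp_continuous (continuous_const.max (continuous_const.min continuous_id)) hmem
  have hGderiv : ∀ k (ζ : ℝ), HasDerivAt (fun u => ∫ t in (0:ℝ)..u, β k t) (β k ζ) ζ :=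
    fun k ζ => ((hβcont k).integral_hasStrictDerivAt 0 ζ).hasDerivAt
  have hGF : ∀ k, ∀ ζ ∈ Set.Icc (0:ℝ) 1,
      (∫ t in (0:ℝ)..ζ, β k t) = ∫ t in (0:ℝ)..ζ, α k t := by
    intro k ζ hζ
    apply intervalIntegral.integral_congr
    intro t ht
    rw [Set.uIcc_of_le hζ.1] at ht
    exact hβeq k t (Set.Icc_subset_Icc le_rfl hζ.2 ht)
  -- the diagonal entries of Φω
  set E : Fin n → ℝ → ℂ :=
    fun k ζ => Complex.exp (-(Complex.I * (ω:ℂ) * ((∫ τ in (0:ℝ)..ζ, α k τ : ℝ) : ℂ))) with hE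
  have hΦdiag : ∀ ζ, Φω ζ = Matrix.diagonal (fun k => E k ζ) := hΦω
  have hEne : ∀ k ζ, E k ζ ≠ 0 := fun k ζ => Complex.exp_ne_zero _
  have hEderiv : ∀ k, ∀ ζ ∈ Set.Icc (0:ℝ) 1,
      HasDerivWithinAt (E k) (-(Complex.I * (ω:ℂ) * ((α k ζ : ℝ):ℂ)) * E k ζ)
        (Set.Icc 0 1) ζ := by
    intro k ζ hζ
    have h1 : HasDerivWithinAt (fun u => ∫ t in (0:ℝ)..u, β k t) (β k ζ) (Set.Icc 0 1) ζ :=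
      (hGderiv k ζ).hasDerivWithinAt
    have h2 : HasDerivWithinAt (fun u => ((∫ t in (0:ℝ)..u, β k t : ℝ) : ℂ))
        ((β k ζ : ℝ) : ℂ) (Set.Icc 0 1) ζ := by
      exact Complex.ofRealCLM.hasFDerivAt.comp_hasDerivWithinAt ζ h1
    have h3 := (h2.const_mul (-(Complex.I * (ω:ℂ)))).cexp
    have heq : ∀ u ∈ Set.Icc (0:ℝ) 1,
        E k u = Complex.exp (-(Complex.I * (ω:ℂ)) * ((∫ t in (0:ℝ)..u, β k t : ℝ) : ℂ)) := by
      intro u hu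
      rw [hE]
      simp only
      rw [hGF k u hu, neg_mul, mul_assoc]
    have h5 := h3.congr heq (heq ζ hζ)
    refine h5.congr_deriv ?_
    rw [heq ζ hζ, hβeq k ζ hζ]
    ring
  have hEcont : ∀ k, ContinuousOn (E k) (Set.Icc (0:ℝ) 1) :=
    fun k ζ hζ => (hEderiv k ζ hζ).continuousWithinAt
  -- derivative of Φω
  set Φ' : ℝ → Matrix (Fin n) (Fin n) ℂ :=
    fun ζ => Matrix.diagonal (fun k => -(Complex.I * (ω:ℂ) * ((α k ζ : ℝ):ℂ)) * E k ζ) with hΦ'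
  have hΦentry : ∀ i j, ∀ ζ ∈ Set.Icc (0:ℝ) 1,
      HasDerivWithinAt (fun t => Φω t i j) (Φ' ζ i j) (Set.Icc 0 1) ζ := by
    intro i j ζ hζ
    simp only [hΦdiag, hΦ', Matrix.diagonal_apply]
    by_cases h : i = j
    · subst h
      simp only [if_pos rfl]
      exact hEderiv i ζ hζ
    · simp only [if_neg h]
      exact hasDerivWithinAt_const _ _ _
  have hΦcont : ContinuousOn Φω (Set.Icc (0:ℝ) 1) :=
    contOn_matrix fun i j ζ hζ => (hΦentry i j ζ hζ).continuousWithinAt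
  have hΦdet : ∀ ζ, IsUnit (Φω ζ).det := by
    intro ζ
    rw [hΦdiag, Matrix.det_diagonal]
    exact isUnit_iff_ne_zero.2 (Finset.prod_ne_zero_iff.2 fun k _ => hEne k ζ)
  have hΦinv : ∀ ζ, (Φω ζ)⁻¹ = Matrix.diagonal (fun k => (E k ζ)⁻¹) := by
    intro ζ
    apply Matrix.inv_eq_left_inv
    rw [hΦdiag, Matrix.diagonal_mul_diagonal]
    rw [show (fun k => (E k ζ)⁻¹ * E k ζ) = fun _ => (1:ℂ) from
      funext fun k => inv_mul_cancel₀ (hEne k ζ), Matrix.diagonal_one]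
  have hΦicont : ContinuousOn (fun ζ => (Φω ζ)⁻¹) (Set.Icc (0:ℝ) 1) := by
    apply contOn_matrix
    intro i j
    simp only [hΦinv, Matrix.diagonal_apply]
    by_cases h : i = j
    · subst h
      simp only [if_pos rfl]
      exact (hEcont i).inv₀ fun ζ hζ => hEne i ζ
    · simp only [if_neg h]
      exact continuousOn_const
  -- unit facts for Sᴴ
  have hShdet : ∀ ζ ∈ Set.Icc (0:ℝ) 1, IsUnit ((S ζ)ᴴ).det := by
    intro ζ hζ
    rw [Matrix.det_conjTranspose]
    exact ((Matrix.isUnit_iff_isUnit_det _).1 (hSunit ζ hζ)).star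
  have hShSi : ∀ ζ ∈ Set.Icc (0:ℝ) 1, (S ζ)ᴴ * ((S ζ)ᴴ)⁻¹ = 1 :=
    fun ζ hζ => Matrix.mul_nonsing_inv _ (hShdet ζ hζ)
  have hSiSh : ∀ ζ ∈ Set.Icc (0:ℝ) 1, ((S ζ)ᴴ)⁻¹ * (S ζ)ᴴ = 1 :=
    fun ζ hζ => Matrix.nonsing_inv_mul _ (hShdet ζ hζ)
  have hP₁det : IsUnit P₁.det := (Matrix.isUnit_iff_isUnit_det _).1 hP₁inv
  have hP₁P : P₁⁻¹ * P₁ = 1 := Matrix.nonsing_inv_mul _ hP₁det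
  -- the key algebraic identity
  have hkey : ∀ ζ ∈ Set.Icc (0:ℝ) 1,
      ((S ζ)ᴴ)⁻¹ * P₁⁻¹ = (Δ ζ)⁻¹ * ((S ζ)ᴴ)⁻¹ * H ζ := by
    intro ζ hζ
    have hHP : H ζ * P₁ = (S ζ)ᴴ * Δ ζ * ((S ζ)ᴴ)⁻¹ := by
      have h0 := congrArg Matrix.conjTranspose (hdiagz ζ hζ)
      simp only [Matrix.conjTranspose_mul] at h0
      rw [(hHherm ζ hζ).eq, hP₁herm.eq, Matrix.conjTranspose_nonsing_inv, hΔherm ζ hζ] at h0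
      rw [h0, Matrix.mul_assoc]
    have hleft : ((S ζ)ᴴ * (Δ ζ)⁻¹ * ((S ζ)ᴴ)⁻¹ * H ζ) * P₁ = 1 := by
      rw [Matrix.mul_assoc ((S ζ)ᴴ * (Δ ζ)⁻¹ * ((S ζ)ᴴ)⁻¹) (H ζ) P₁, hHP]
      calc (S ζ)ᴴ * (Δ ζ)⁻¹ * ((S ζ)ᴴ)⁻¹ * ((S ζ)ᴴ * Δ ζ * ((S ζ)ᴴ)⁻¹)
          = (S ζ)ᴴ * (Δ ζ)⁻¹ * (((S ζ)ᴴ)⁻¹ * (S ζ)ᴴ) * Δ ζ * ((S ζ)ᴴ)⁻¹ := by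
            simp only [Matrix.mul_assoc]
        _ = (S ζ)ᴴ * ((Δ ζ)⁻¹ * Δ ζ) * ((S ζ)ᴴ)⁻¹ := by
            rw [hSiSh ζ hζ, Matrix.mul_one]
            simp only [Matrix.mul_assoc]
        _ = 1 := by
            rw [Matrix.nonsing_inv_mul _ (hΔdet ζ hζ), Matrix.mul_one, hShSi ζ hζ]
    have hPinv : P₁⁻¹ = (S ζ)ᴴ * (Δ ζ)⁻¹ * ((S ζ)ᴴ)⁻¹ * H ζ := Matrix.inv_eq_left_inv hleft
    rw [hPinv]
    calc ((S ζ)ᴴ)⁻¹ * ((S ζ)ᴴ * (Δ ζ)⁻¹ * ((S ζ)ᴴ)⁻¹ * H ζ)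
        = (((S ζ)ᴴ)⁻¹ * (S ζ)ᴴ) * ((Δ ζ)⁻¹ * (((S ζ)ᴴ)⁻¹ * H ζ)) := by
          simp only [Matrix.mul_assoc]
      _ = (Δ ζ)⁻¹ * ((S ζ)ᴴ)⁻¹ * H ζ := by
          rw [hSiSh ζ hζ, Matrix.one_mul, Matrix.mul_assoc]
  -- the derivative of y
  have hyderiv : ∀ ζ ∈ Set.Icc (0:ℝ) 1, HasDerivWithinAt y
      ((Φ' ζ * ((S ζ)ᴴ)⁻¹ + Φω ζ * Sstarinv' ζ) *ᵥ w ζ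
        + (Φω ζ * ((S ζ)ᴴ)⁻¹) *ᵥ w' ζ) (Set.Icc 0 1) ζ := by
    intro ζ hζ
    have hyfun : y = fun t => (Φω t * ((S t)ᴴ)⁻¹) *ᵥ w t := funext hy
    rw [hyfun]
    exact hasDW_mulVec
      (hasDW_matmul (fun i j => hΦentry i j ζ hζ) (fun i j => hSstarinv' i j ζ hζ))
      (hw' ζ hζ)
  -- the vector identity
  have hvec : ∀ ζ ∈ Set.Icc (0:ℝ) 1,
      (Φ' ζ * ((S ζ)ᴴ)⁻¹ + Φω ζ * Sstarinv' ζ) *ᵥ w ζ + (Φω ζ * ((S ζ)ᴴ)⁻¹) *ᵥ w' ζ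
        = ((r : ℂ) • (Δ ζ)⁻¹ + Qω ζ) *ᵥ y ζ := by
    intro ζ hζ
    -- commutation of diagonal matrices
    have hcomm : (Δ ζ)⁻¹ * Φω ζ = Φω ζ * (Δ ζ)⁻¹ := by
      rw [hΔinv ζ hζ, hΦdiag, Matrix.diagonal_mul_diagonal, Matrix.diagonal_mul_diagonal]
      have : (fun i => ((α i ζ : ℝ) : ℂ) * E i ζ) = fun i => E i ζ * ((α i ζ : ℝ) : ℂ) :=
        funext fun i => mul_comm _ _
      rw [this]
    -- Φ' in closed form
    have hD : Φ' ζ = (-(Complex.I * (ω:ℂ))) • (Φω ζ * (Δ ζ)⁻¹) := by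
      rw [hΦ', hΦdiag, hΔinv ζ hζ, Matrix.diagonal_mul_diagonal]
      ext i j
      by_cases h : i = j
      · subst h
        simp only [Matrix.smul_apply, Matrix.diagonal_apply_eq, smul_eq_mul]
        ring
      · simp [Matrix.diagonal_apply_ne _ h]
    -- step 1 : rewrite the w' term
    have hPw : P₁ *ᵥ w' ζ = ((r : ℂ) + (ω : ℂ) * Complex.I) • x ζ - G₀ *ᵥ w ζ := by
      rw [eq_sub_iff_add_eq]
      exact (hode ζ hζ).symm
    have e1 : Φω ζ * ((S ζ)ᴴ)⁻¹ = Φω ζ * ((Δ ζ)⁻¹ * ((S ζ)ᴴ)⁻¹ * H ζ) * P₁ := by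
      calc Φω ζ * ((S ζ)ᴴ)⁻¹ = Φω ζ * ((S ζ)ᴴ)⁻¹ * (P₁⁻¹ * P₁) := by
            rw [hP₁P, Matrix.mul_one]
        _ = Φω ζ * (((S ζ)ᴴ)⁻¹ * P₁⁻¹) * P₁ := by simp only [Matrix.mul_assoc]
        _ = _ := by rw [hkey ζ hζ]
    have step1 : (Φω ζ * ((S ζ)ᴴ)⁻¹) *ᵥ w' ζ
        = ((r : ℂ) + (ω : ℂ) * Complex.I) • ((Φω ζ * ((Δ ζ)⁻¹ * ((S ζ)ᴴ)⁻¹)) *ᵥ w ζ)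
          - (Φω ζ * ((Δ ζ)⁻¹ * ((S ζ)ᴴ)⁻¹ * H ζ) * G₀) *ᵥ w ζ := by
      rw [e1, ← Matrix.mulVec_mulVec, hPw, Matrix.mulVec_sub, Matrix.mulVec_smul,
        Matrix.mulVec_mulVec]
      congr 1
      · congr 1
        have : Φω ζ * ((Δ ζ)⁻¹ * ((S ζ)ᴴ)⁻¹ * H ζ) = (Φω ζ * ((Δ ζ)⁻¹ * ((S ζ)ᴴ)⁻¹)) * H ζ := by
          simp only [Matrix.mul_assoc]
        rw [this, ← Matrix.mulVec_mulVec, ← hw ζ hζ]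
    -- step 2 : the Φ' term
    have step2 : (Φ' ζ * ((S ζ)ᴴ)⁻¹) *ᵥ w ζ
        = (-(Complex.I * (ω:ℂ))) • ((Φω ζ * ((Δ ζ)⁻¹ * ((S ζ)ᴴ)⁻¹)) *ᵥ w ζ) := by
      rw [hD, Matrix.smul_mul, Matrix.smul_mulVec, Matrix.mul_assoc]
    -- step 3 : the right-hand side
    have hΦiΦ : (Φω ζ)⁻¹ * Φω ζ = 1 := Matrix.nonsing_inv_mul _ (hΦdet ζ)
    have hQSi : Q ζ * ((S ζ)ᴴ)⁻¹
        = -((Δ ζ)⁻¹ * (((S ζ)ᴴ)⁻¹ * (H ζ * G₀))) + Sstarinv' ζ := by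
      rw [hQ ζ, Matrix.add_mul, Matrix.neg_mul]
      simp only [Matrix.mul_assoc]
      rw [hShSi ζ hζ, Matrix.mul_one, Matrix.mul_one]
    have step3 : ((r : ℂ) • (Δ ζ)⁻¹ + Qω ζ) *ᵥ y ζ
        = (r : ℂ) • ((Φω ζ * ((Δ ζ)⁻¹ * ((S ζ)ᴴ)⁻¹)) *ᵥ w ζ)
          + (-(Φω ζ * ((Δ ζ)⁻¹ * (((S ζ)ᴴ)⁻¹ * (H ζ * G₀)))) *ᵥ w ζ
            + (Φω ζ * Sstarinv' ζ) *ᵥ w ζ) := by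
      have hc1 : (Δ ζ)⁻¹ * (Φω ζ * ((S ζ)ᴴ)⁻¹) = Φω ζ * ((Δ ζ)⁻¹ * ((S ζ)ᴴ)⁻¹) := by
        rw [← Matrix.mul_assoc, hcomm, Matrix.mul_assoc]
      have hc2 : Qω ζ * (Φω ζ * ((S ζ)ᴴ)⁻¹) = Φω ζ * (Q ζ * ((S ζ)ᴴ)⁻¹) := by
        rw [hQω ζ]
        calc Φω ζ * Q ζ * (Φω ζ)⁻¹ * (Φω ζ * ((S ζ)ᴴ)⁻¹)
            = Φω ζ * Q ζ * ((Φω ζ)⁻¹ * Φω ζ) * ((S ζ)ᴴ)⁻¹ := by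
              simp only [Matrix.mul_assoc]
          _ = _ := by rw [hΦiΦ, Matrix.mul_one, Matrix.mul_assoc]
      have h1 : ((r : ℂ) • (Δ ζ)⁻¹) *ᵥ ((Φω ζ * ((S ζ)ᴴ)⁻¹) *ᵥ w ζ)
          = (r : ℂ) • ((Φω ζ * ((Δ ζ)⁻¹ * ((S ζ)ᴴ)⁻¹)) *ᵥ w ζ) := by
        rw [Matrix.mulVec_mulVec, Matrix.smul_mul, hc1, Matrix.smul_mulVec]
      have h2 : Qω ζ *ᵥ ((Φω ζ * ((S ζ)ᴴ)⁻¹) *ᵥ w ζ)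
          = -(Φω ζ * ((Δ ζ)⁻¹ * (((S ζ)ᴴ)⁻¹ * (H ζ * G₀)))) *ᵥ w ζ
            + (Φω ζ * Sstarinv' ζ) *ᵥ w ζ := by
        rw [Matrix.mulVec_mulVec, hc2, hQSi, Matrix.mul_add, Matrix.mul_neg,
          Matrix.add_mulVec]
      rw [hy ζ, Matrix.add_mulVec, h1, h2]
    -- combine everything
    rw [Matrix.add_mulVec, step1, step2, step3]
    have hHGassoc : Φω ζ * ((Δ ζ)⁻¹ * ((S ζ)ᴴ)⁻¹ * H ζ) * G₀
        = Φω ζ * ((Δ ζ)⁻¹ * (((S ζ)ᴴ)⁻¹ * (H ζ * G₀))) := by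
      simp only [Matrix.mul_assoc]
    rw [hHGassoc, Matrix.neg_mulVec]
    set v := (Φω ζ * ((Δ ζ)⁻¹ * ((S ζ)ᴴ)⁻¹)) *ᵥ w ζ
    set u := (Φω ζ * ((Δ ζ)⁻¹ * (((S ζ)ᴴ)⁻¹ * (H ζ * G₀)))) *ᵥ w ζ
    set p := (Φω ζ * Sstarinv' ζ) *ᵥ w ζ
    have hscal : (-(Complex.I * (ω:ℂ))) • v + ((r : ℂ) + (ω : ℂ) * Complex.I) • v
        = (r : ℂ) • v := by
      rw [← add_smul]
      congr 1
      ring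
    calc (-(Complex.I * (ω:ℂ))) • v + p + (((r : ℂ) + (ω : ℂ) * Complex.I) • v - u)
        = ((-(Complex.I * (ω:ℂ))) • v + ((r : ℂ) + (ω : ℂ) * Complex.I) • v) + (-u + p) := by
          abel
      _ = (r : ℂ) • v + (-u + p) := by rw [hscal]
  constructor
  · intro ζ hζ
    exact (hvec ζ hζ) ▸ (hyderiv ζ hζ)
  · -- continuity
    have hΔicont : ContinuousOn (fun ζ => (Δ ζ)⁻¹) (Set.Icc (0:ℝ) 1) := by
      apply ContinuousOn.congr (f := fun ζ => Matrix.diagonal (fun k => ((α k ζ : ℝ) : ℂ)))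
      · apply contOn_matrix
        intro i j
        simp only [Matrix.diagonal_apply]
        by_cases h : i = j
        · subst h
          simp only [if_pos rfl]
          exact Complex.continuous_ofReal.comp_continuousOn (hαcont i)
        · simp only [if_neg h]
          exact continuousOn_const
      · intro ζ hζ
        exact hΔinv ζ hζ
    have hHcontM : ContinuousOn H (Set.Icc (0:ℝ) 1) := contOn_matrix hHcont
    have hSicontM : ContinuousOn (fun ζ => ((S ζ)ᴴ)⁻¹) (Set.Icc (0:ℝ) 1) :=
      contOn_matrix hSicont
    have hShcontM : ContinuousOn (fun ζ => (S ζ)ᴴ) (Set.Icc (0:ℝ) 1) := by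
      apply contOn_matrix
      intro i j
      exact Complex.continuous_conj.comp_continuousOn (hScont j i)
    have hSstarinvcontM : ContinuousOn Sstarinv' (Set.Icc (0:ℝ) 1) :=
      contOn_matrix hSstarinv'cont
    have hQcont : ContinuousOn Q (Set.Icc (0:ℝ) 1) := by
      have : Q = fun ζ => -((Δ ζ)⁻¹ * ((S ζ)ᴴ)⁻¹ * H ζ * G₀ * (S ζ)ᴴ) + Sstarinv' ζ * (S ζ)ᴴ :=
        funext hQ
      rw [this]
      exact ((((hΔicont.mul hSicontM).mul hHcontM).mul continuousOn_const).mul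
        hShcontM).neg.add (hSstarinvcontM.mul hShcontM)
    have hQωcont : ContinuousOn Qω (Set.Icc (0:ℝ) 1) := by
      have : Qω = fun ζ => Φω ζ * Q ζ * (Φω ζ)⁻¹ := funext hQω
      rw [this]
      exact (hΦcont.mul hQcont).mul hΦicont
    have hycontM : ContinuousOn y (Set.Icc (0:ℝ) 1) := by
      have : y = fun ζ => (Φω ζ * ((S ζ)ᴴ)⁻¹) *ᵥ w ζ := funext hy
      rw [this]
      exact contOn_mulVec (hΦcont.mul hSicontM) hwcont
    exact contOn_mulVec ((hΔicont.const_smul ((r:ℂ))).add hQωcont) hycontM
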